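/- Let (R, m) be a Noetherian local ring, let a_{•,0} and a_{•,1} be m-filtrations on R, and let (a_{•,t})_{t∈[0,1]} be the geodesic between them. Fix 0 ≤ t < t' ≤ 1 and λ > 0, and set b := a_{λ,0} ∩ a_{λ,t}, b' := a_{λ,0} ∩ a_{λ,t'}, and c := a_{λ,t} ∩ a_{λ,t'}. Then b' ⊆ b, b' ⊆ c, and there is an isomorphism of R-modules a_{λ,t}/b ≅ c/b'. -/

import Mathlib

open IsLocalRing

variable {R : Type*} [CommRing R] [IsNoetherianRing R] [IsLocalRing R]

/-- An ideal is `m`-primary: proper with radical the maximal ideal. -/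
def IsPrimaryToMax (R : Type*) [CommRing R] [IsLocalRing R] (I : Ideal R) : Prop :=
  I ≠ ⊤ ∧ I.radical = maximalIdeal R

/-- An `m`-filtration on a Noetherian local ring `(R, m)`: a family of `m`-primary ideals
indexed by `ℝ` (only the values at `λ > 0` matter, with the convention `a 0 = R`),
decreasing, left-continuous and multiplicative. -/
structure IsMFiltration (R : Type*) [CommRing R] [IsLocalRing R] (a : ℝ → Ideal R) : Prop where
  primary : ∀ lam : ℝ, 0 < lam → IsPrimaryToMax R (a lam)
  antitone : ∀ lam mu : ℝ, 0 < mu → mu < lam → a lam ≤ a mu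
  left_cont : ∀ lam : ℝ, 0 < lam → ∃ ε > (0 : ℝ), ∀ ε' : ℝ, 0 < ε' → ε' ≤ ε →
    a (lam - ε') = a lam
  mul : ∀ lam mu : ℝ, 0 < lam → 0 < mu → a lam * a mu ≤ a (lam + mu)
  zero : a 0 = ⊤

/-- The geodesic between two `m`-filtrations `a₀` and `a₁` at time `t`:
`a_{λ,t} = Σ_{μ,ν ≥ 0, (1−t)μ + tν = λ} (a₀_μ ∩ a₁_ν)` (sum of ideals, i.e. supremum
over all such pairs `(μ, ν)` of nonnegative reals). -/
noncomputable def geodesic {R : Type*} [CommRing R] (a₀ a₁ : ℝ → Ideal R)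
    (t lam : ℝ) : Ideal R :=
  ⨆ (p : ℝ × ℝ) (_ : 0 ≤ p.1 ∧ 0 ≤ p.2 ∧ (1 - t) * p.1 + t * p.2 = lam),
    (a₀ p.1 ⊓ a₁ p.2)

/-- Monotonicity of an `m`-filtration, allowing index `0` (where `a 0 = ⊤`). -/
lemma IsMFiltration.mono {a : ℝ → Ideal R} (h : IsMFiltration R a) {x y : ℝ}
    (hx : 0 ≤ x) (hxy : x ≤ y) : a y ≤ a x := by
  rcases hx.eq_or_lt with h0 | h0
  · rw [← h0, h.zero]; exact le_top
  · rcases hxy.eq_or_lt with he | hl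
    · rw [he]
    · exact h.antitone y x h0 hl

/-- Each admissible pair contributes to the geodesic. -/
lemma pair_le_geodesic {a₀ a₁ : ℝ → Ideal R} {t lam μ ν : ℝ}
    (hμ : 0 ≤ μ) (hν : 0 ≤ ν) (heq : (1 - t) * μ + t * ν = lam) :
    a₀ μ ⊓ a₁ ν ≤ geodesic a₀ a₁ t lam :=
  le_iSup_of_le (μ, ν) (le_iSup_of_le ⟨hμ, hν, heq⟩ le_rfl)

/-- Along the geodesic between `m`-filtrations `a₀` and `a₁`, with `0 ≤ t < t' ≤ 1` and
`λ > 0`, setting `b = a_{λ,0} ∩ a_{λ,t}`, `b' = a_{λ,0} ∩ a_{λ,t'}` and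
`c = a_{λ,t} ∩ a_{λ,t'}`, one has `b' ⊆ b`, `b' ⊆ c`, and an isomorphism of `R`-modules
`a_{λ,t}/b ≅ c/b'`. -/
theorem geodesic_parallelogram (a₀ a₁ : ℝ → Ideal R)
    (h₀ : IsMFiltration R a₀) (h₁ : IsMFiltration R a₁)
    (t t' : ℝ) (ht : 0 ≤ t) (htt' : t < t') (ht' : t' ≤ 1)
    (lam : ℝ) (hlam : 0 < lam) :
    a₀ lam ⊓ geodesic a₀ a₁ t' lam ≤ a₀ lam ⊓ geodesic a₀ a₁ t lam ∧
    a₀ lam ⊓ geodesic a₀ a₁ t' lam ≤ geodesic a₀ a₁ t lam ⊓ geodesic a₀ a₁ t' lam ∧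
    Nonempty
      ((↥(geodesic a₀ a₁ t lam) ⧸
          Submodule.comap (geodesic a₀ a₁ t lam).subtype
            (a₀ lam ⊓ geodesic a₀ a₁ t lam)) ≃ₗ[R]
        (↥(geodesic a₀ a₁ t lam ⊓ geodesic a₀ a₁ t' lam) ⧸
          Submodule.comap (geodesic a₀ a₁ t lam ⊓ geodesic a₀ a₁ t' lam).subtype
            (a₀ lam ⊓ geodesic a₀ a₁ t' lam))) := by
  have ht1 : t < 1 := lt_of_lt_of_le htt' ht'
  have h1t : (0 : ℝ) < 1 - t := by linarith
  have ht'0 : (0 : ℝ) < t' := lt_of_le_of_lt ht htt'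
  set I := a₀ lam with hI
  set A := geodesic a₀ a₁ t lam with hA
  set A' := geodesic a₀ a₁ t' lam with hA'
  -- the diagonal pair
  have hdiag : a₀ lam ⊓ a₁ lam ≤ A := pair_le_geodesic hlam.le hlam.le (by ring)
  -- split `A'` according to whether `μ ≥ λ` or `μ < λ`
  set S₁ : Ideal R := ⨆ (p : ℝ × ℝ) (_ : (0 ≤ p.1 ∧ 0 ≤ p.2 ∧ (1 - t') * p.1 + t' * p.2 = lam)
      ∧ lam ≤ p.1), (a₀ p.1 ⊓ a₁ p.2) with hS₁
  set S₂ : Ideal R := ⨆ (p : ℝ × ℝ) (_ : (0 ≤ p.1 ∧ 0 ≤ p.2 ∧ (1 - t') * p.1 + t' * p.2 = lam)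
      ∧ p.1 < lam), (a₀ p.1 ⊓ a₁ p.2) with hS₂
  have hsplit : A' ≤ S₁ ⊔ S₂ := by
    refine iSup_le fun p => iSup_le fun hp => ?_
    rcases le_or_gt lam p.1 with h | h
    · exact le_sup_of_le_left (le_iSup_of_le p (le_iSup_of_le ⟨hp, h⟩ le_rfl))
    · exact le_sup_of_le_right (le_iSup_of_le p (le_iSup_of_le ⟨hp, h⟩ le_rfl))
  have hS₁I : S₁ ≤ I := by
    refine iSup_le fun p => iSup_le fun hp => ?_
    exact inf_le_left.trans (h₀.mono hlam.le hp.2)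
  have hS₁A : S₁ ≤ A := by
    refine iSup_le fun p => iSup_le fun hp => ?_
    obtain ⟨⟨h1, h2, h3⟩, hpl⟩ := hp
    have h1t' : (0 : ℝ) ≤ 1 - t' := by linarith
    -- since μ ≥ λ we get ν ≤ λ
    have hν : p.2 ≤ lam := by nlinarith
    have hmu0 : 0 ≤ (lam - t * p.2) / (1 - t) := by
      apply div_nonneg _ h1t.le
      nlinarith
    have hmule : (lam - t * p.2) / (1 - t) ≤ p.1 := by
      rw [div_le_iff₀ h1t]
      nlinarith [mul_nonneg (sub_nonneg.2 htt'.le) (sub_nonneg.2 (hν.trans hpl))]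
    refine le_trans ?_ (pair_le_geodesic (μ := (lam - t * p.2) / (1 - t)) (ν := p.2)
      hmu0 h2 (by field_simp; ring))
    exact inf_le_inf (h₀.mono hmu0 hmule) le_rfl
  have hS₂a₁ : S₂ ≤ a₁ lam := by
    refine iSup_le fun p => iSup_le fun hp => ?_
    obtain ⟨⟨h1, h2, h3⟩, hpl⟩ := hp
    have h1t' : (0 : ℝ) ≤ 1 - t' := by linarith
    have hν : lam ≤ p.2 := by nlinarith
    exact inf_le_right.trans (h₁.mono hlam.le hν)
  have keyA : I ⊓ A' ≤ A := by
    calc I ⊓ A' ≤ I ⊓ (S₁ ⊔ S₂) := inf_le_inf_left _ hsplit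
      _ = S₁ ⊔ (S₂ ⊓ I) := by rw [inf_comm, sup_inf_assoc_of_le _ hS₁I]
      _ ≤ A := sup_le hS₁A
          ((le_inf inf_le_right (inf_le_left.trans hS₂a₁)).trans hdiag)
  have keyB : A ≤ (A ⊓ A') ⊔ I := by
    refine iSup_le fun p => iSup_le fun hp => ?_
    obtain ⟨h1, h2, h3⟩ := hp
    rcases le_or_gt lam p.1 with h | h
    · exact le_sup_of_le_right (inf_le_left.trans (h₀.mono hlam.le h))
    · have ht0 : 0 < t := by
        rcases ht.eq_or_lt with h0 | h0
        · exfalso; rw [← h0] at h3; simp at h3; linarith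
        · exact h0
      have hp2 : lam ≤ p.2 := by nlinarith
      refine le_sup_of_le_left (le_inf (pair_le_geodesic h1 h2 h3) ?_)
      rcases le_or_gt lam (t' * p.2) with hc | hc
      · -- use the pair (0, λ/t')
        refine le_trans ?_ (pair_le_geodesic (μ := 0) (ν := lam / t')
          le_rfl (div_nonneg hlam.le ht'0.le) (by field_simp; ring))
        refine inf_le_inf (h₀.mono le_rfl h1) (h₁.mono (div_nonneg hlam.le ht'0.le) ?_)
        rw [div_le_iff₀ ht'0]; linarith
      · -- here necessarily t' < 1; use the pair ((λ - t'ν)/(1 - t'), ν)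
        have ht'1 : t' < 1 := by
          rcases ht'.eq_or_lt with h0 | h0
          · exfalso; rw [h0] at hc; linarith
          · exact h0
        have h1t' : (0 : ℝ) < 1 - t' := by linarith
        have hμ'0 : 0 ≤ (lam - t' * p.2) / (1 - t') := div_nonneg (by linarith) h1t'.le
        refine le_trans ?_ (pair_le_geodesic (μ := (lam - t' * p.2) / (1 - t')) (ν := p.2)
          hμ'0 h2 (by field_simp; ring))
        refine inf_le_inf (h₀.mono hμ'0 ?_) le_rfl
        rw [div_le_iff₀ h1t']
        nlinarith [mul_nonneg (sub_nonneg.2 htt'.le) (sub_nonneg.2 (h.le.trans hp2))]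
  refine ⟨le_inf inf_le_left keyA, le_inf keyA inf_le_right, ?_⟩
  have hb' : I ⊓ A' = (A ⊓ A') ⊓ I :=
    le_antisymm (le_inf (le_inf keyA inf_le_right) inf_le_left)
      (le_inf inf_le_right (inf_le_left.trans inf_le_right))
  have hsup : (A ⊓ A') ⊔ I = A ⊔ I :=
    le_antisymm (sup_le (inf_le_left.trans le_sup_left) le_sup_right)
      (sup_le (keyB.trans le_rfl) le_sup_right)
  rw [show I ⊓ A = A ⊓ I from inf_comm .., hb']
  have e1 := LinearMap.quotientInfEquivSupQuotient A I
  have e2 := LinearMap.quotientInfEquivSupQuotient (A ⊓ A') I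
  rw [hsup] at e2
  exact ⟨e1.trans e2.symm⟩
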